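/- arXiv:1105.1123 — 7 statements merged into one kernel-verified Lean document; each statement's English description precedes it below -/
import Mathlib

section
/- Let L be a finite-dimensional nilpotent Lie algebra over ℂ, V an L-module, and suppose I ⊆ L is an ideal such that some nonzero v ∈ V satisfies I·v = 0. If X ∈ L acts locally nilpotently on V, then there exists a nonzero w ∈ V with I·w = 0 and X·w = 0. -/
/-- If `L` is a finite-dimensional nilpotent complex Lie algebra, `V` an
`L`-module, `I` an ideal of `L` annihilating some nonzero `v`, and `X ∈ L` acts locally
nilpotently on `V`, then some nonzero `w` is annihilated by both `I` and `X`. -/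
theorem stmt0 (L : Type*) [LieRing L] [LieAlgebra ℂ L]
    [FiniteDimensional ℂ L] [LieRing.IsNilpotent L]
    (V : Type*) [AddCommGroup V] [Module ℂ V] [LieRingModule L V] [LieModule ℂ L V]
    (I : LieIdeal ℂ L) (v : V) (hv : v ≠ 0) (hIv : ∀ y ∈ I, ⁅y, v⁆ = 0)
    (X : L) (hX : ∀ u : V, ∃ m : ℕ, (fun u : V => ⁅X, u⁆)^[m] u = 0) :
    ∃ w : V, w ≠ 0 ∧ (∀ y ∈ I, ⁅y, w⁆ = 0) ∧ ⁅X, w⁆ = 0 := by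
  set f : V → V := fun u : V => ⁅X, u⁆ with hf
  have hann : ∀ n : ℕ, ∀ y ∈ I, ⁅y, f^[n] v⁆ = 0 := by
    intro n
    induction n with
    | zero => simpa using hIv
    | succ n ih =>
      intro y hy
      rw [Function.iterate_succ_apply']
      have h1 : ⁅y, (⁅X, f^[n] v⁆ : V)⁆ = ⁅⁅y, X⁆, f^[n] v⁆ + ⁅X, ⁅y, f^[n] v⁆⁆ :=
        leibniz_lie y X (f^[n] v)
      have h2 : ⁅⁅y, X⁆, f^[n] v⁆ = (0 : V) := ih _ (lie_mem_left ℂ L I y X hy)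
      have h3 : ⁅y, f^[n] v⁆ = (0 : V) := ih y hy
      simp only [hf]
      rw [h1, h2, h3, lie_zero, add_zero]
  have hex : ∃ m : ℕ, f^[m] v = 0 := hX v
  classical
  set m := Nat.find hex with hm
  have hm0 : m ≠ 0 := by
    intro h
    have := Nat.find_spec hex
    rw [← hm, h] at this
    exact hv (by simpa using this)
  refine ⟨f^[m - 1] v, ?_, hann _, ?_⟩
  · exact Nat.find_min hex (Nat.sub_lt (Nat.pos_of_ne_zero hm0) one_pos)
  · have : f (f^[m - 1] v) = f^[m] v := by
      rw [← Function.iterate_succ_apply' f, Nat.succ_eq_add_one, Nat.sub_add_cancel (Nat.one_le_iff_ne_zero.mpr hm0)]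
    simpa [hf] using this.trans (Nat.find_spec hex)
end

section
/- Let V be a module over the Virasoro algebra (with basis {e_i : i ∈ ℤ} ∪ {c}, c central, [e_i,e_j] = (j−i)e_{i+j} + δ_{i,−j}(i³−i)/12·c) on which e_1 and e_2 act locally nilpotently, and let v ∈ V be nonzero with e_1·v = 0. Then there exists n ≥ 2 such that e_i·v = 0 for all i > n. -/
/-- In a module over the Virasoro algebra on which `e 1` and `e 2` act
locally nilpotently, any nonzero `v` with `e 1 · v = 0` satisfies `e i · v = 0` for all
`i > n`, for some `n ≥ 2`. The Virasoro algebra is encoded by elements `e i` and a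
central `c` of a complex Lie algebra satisfying the defining bracket relations. -/
theorem stmt3 (L : Type*) [LieRing L] [LieAlgebra ℂ L] (e : ℤ → L) (c : L)
    (hc : ∀ x : L, ⁅c, x⁆ = 0)
    (he : ∀ i j : ℤ, ⁅e i, e j⁆ =
      ((j - i : ℤ) : ℂ) • e (i + j) + (if i = -j then ((i : ℂ)^3 - i) / 12 else 0) • c)
    (V : Type*) [AddCommGroup V] [Module ℂ V] [LieRingModule L V] [LieModule ℂ L V]
    (h1 : ∀ u : V, ∃ m : ℕ, (fun u : V => ⁅e 1, u⁆)^[m] u = 0)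
    (h2 : ∀ u : V, ∃ m : ℕ, (fun u : V => ⁅e 2, u⁆)^[m] u = 0)
    (v : V) (hv : v ≠ 0) (hv1 : ⁅e 1, v⁆ = 0) :
    ∃ n : ℤ, 2 ≤ n ∧ ∀ i > n, ⁅e i, v⁆ = 0 := by
  have key : ∀ k : ℕ, (fun u : V => ⁅e 1, u⁆)^[k] ⁅e 2, v⁆
      = (k.factorial : ℂ) • ⁅e (2 + k), v⁆ := by
    intro k
    induction k with
    | zero => simp
    | succ k ih =>
      rw [Function.iterate_succ_apply', ih]
      have h1k : ⁅e 1, e (2 + k)⁆ = ((k : ℂ) + 1) • e (2 + (k + 1)) := by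
        rw [he]
        have : (1 : ℤ) ≠ -(2 + (k : ℤ)) := by omega
        rw [if_neg this, zero_smul, add_zero]
        have h2 : (1:ℤ) + (2 + (k:ℤ)) = 2 + ((k:ℤ)+1) := by ring
        rw [h2]
        congr 1
        push_cast
        ring
      show ⁅e 1, (k.factorial : ℂ) • ⁅e (2 + (k:ℤ)), v⁆⁆ = _
      rw [lie_smul, leibniz_lie, hv1, lie_zero, add_zero, h1k, smul_lie, smul_smul]
      rw [Nat.factorial_succ]
      push_cast
      ring_nf
  obtain ⟨m, hm⟩ := h1 ⁅e 2, v⁆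
  refine ⟨(m : ℤ) + 2, by omega, fun i hi => ?_⟩
  set k : ℕ := (i - 2).toNat with hk
  have hik : i = 2 + (k : ℤ) := by omega
  have hkm : m ≤ k := by omega
  have hz : (fun u : V => ⁅e 1, u⁆)^[k] ⁅e 2, v⁆ = 0 := by
    have : k = (k - m) + m := by omega
    rw [this, Function.iterate_add_apply, hm, Function.iterate_fixed (by simp)]
  rw [key k] at hz
  rw [hik]
  have := smul_eq_zero.mp hz
  rcases this with h | h
  · exact absurd h (by exact_mod_cast Nat.factorial_ne_zero k)
  · exact h
end

section
/- Let V be a nonzero module over the Virasoro algebra on which every e_i with i > 0 acts locally nilpotently. Then there exists a nonzero v ∈ V such that e_i·v = 0 for all i > 0. -/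
/-- A nonzero Virasoro module on which every `e i`, `i > 0`, acts locally
nilpotently contains a nonzero vector annihilated by all `e i`, `i > 0`. -/
theorem stmt5 (L : Type*) [LieRing L] [LieAlgebra ℂ L] (e : ℤ → L) (c : L)
    (hc : ∀ x : L, ⁅c, x⁆ = 0)
    (he : ∀ i j : ℤ, ⁅e i, e j⁆ =
      ((j - i : ℤ) : ℂ) • e (i + j) + (if i = -j then ((i : ℂ)^3 - i) / 12 else 0) • c)
    (V : Type*) [AddCommGroup V] [Module ℂ V] [LieRingModule L V] [LieModule ℂ L V]
    (hV : ∃ v : V, v ≠ 0)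
    (hnil : ∀ i : ℤ, 0 < i → ∀ u : V, ∃ m : ℕ, (fun u : V => ⁅e i, u⁆)^[m] u = 0) :
    ∃ v : V, v ≠ 0 ∧ ∀ i : ℤ, 0 < i → ⁅e i, v⁆ = 0 := by
  classical
  obtain ⟨v0, hv0⟩ := hV
  -- Claim 1: every vector is eventually annihilated by e k for large k
  have main : ∀ a : ℕ, ∀ w : V, (fun u : V => ⁅e 1, u⁆)^[a] w = 0 →
      ∃ K : ℤ, 2 ≤ K ∧ ∀ k : ℤ, K ≤ k → ⁅e k, w⁆ = 0 := by
    intro a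
    induction a with
    | zero =>
      intro w hw
      simp only [Function.iterate_zero, id_eq] at hw
      subst hw
      exact ⟨2, le_refl _, fun k _ => lie_zero _⟩
    | succ a ih =>
      intro w hw
      rw [Function.iterate_succ_apply] at hw
      obtain ⟨K1, hK1two, hK1⟩ := ih _ hw
      obtain ⟨n, hn⟩ := hnil 1 one_pos ⁅e K1, w⁆
      have sub : ∀ t : ℕ, ∃ μ : ℂ,
          ⁅e (K1 + t), w⁆ = μ • (fun u : V => ⁅e 1, u⁆)^[t] ⁅e K1, w⁆ := by
        intro t
        induction t with
        | zero => exact ⟨1, by simp⟩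
        | succ t iht =>
          obtain ⟨μ, hμ⟩ := iht
          have hk2 : 2 ≤ K1 + (t : ℤ) := by omega
          have hbr : ⁅e 1, e (K1 + (t:ℤ))⁆ = ((K1 + (t:ℤ) - 1 : ℤ) : ℂ) • e (1 + (K1 + (t:ℤ))) := by
            rw [he, if_neg (by omega), zero_smul, add_zero]
          have hlz : ⁅e (K1 + (t:ℤ)), ⁅e 1, w⁆⁆ = 0 := hK1 _ (by omega)
          have key : ((K1 + (t:ℤ) - 1 : ℤ) : ℂ) • ⁅e (1 + (K1 + (t:ℤ))), w⁆
              = ⁅e 1, ⁅e (K1 + (t:ℤ)), w⁆⁆ := by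
            rw [← smul_lie, ← hbr, lie_lie, hlz, sub_zero]
          have hne : ((K1 + (t:ℤ) - 1 : ℤ) : ℂ) ≠ 0 := by
            exact_mod_cast (by exact_mod_cast (by omega : (K1 + (t:ℤ) - 1 : ℤ) ≠ 0) :
              ((K1 + (t:ℤ) - 1 : ℤ) : ℂ) ≠ 0)
          refine ⟨((K1 + (t:ℤ) - 1 : ℤ) : ℂ)⁻¹ * μ, ?_⟩
          have hidx : K1 + ((t+1 : ℕ) : ℤ) = 1 + (K1 + (t:ℤ)) := by push_cast; ring
          rw [hidx]
          have := key
          have h2 : ⁅e (1 + (K1 + (t:ℤ))), w⁆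
              = ((K1 + (t:ℤ) - 1 : ℤ) : ℂ)⁻¹ • ⁅e 1, ⁅e (K1 + (t:ℤ)), w⁆⁆ := by
            rw [← key, smul_smul, inv_mul_cancel₀ hne, one_smul]
          rw [h2, hμ, lie_smul, smul_smul, Function.iterate_succ_apply']
      refine ⟨K1 + n, by omega, fun k hk => ?_⟩
      have ht : k = K1 + ((k - K1).toNat : ℤ) := by omega
      obtain ⟨μ, hμ⟩ := sub (k - K1).toNat
      rw [ht, hμ]
      have htn : (k - K1).toNat = ((k - K1).toNat - n) + n := by omega
      rw [htn, Function.iterate_add_apply, hn]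
      have : (fun u : V => ⁅e 1, u⁆)^[(k - K1).toNat - n] (0:V) = 0 :=
        Function.iterate_fixed (lie_zero _) _
      rw [this, smul_zero]
  have claim1 : ∀ w : V, ∃ K : ℤ, 2 ≤ K ∧ ∀ k : ℤ, K ≤ k → ⁅e k, w⁆ = 0 := by
    intro w
    obtain ⟨a, ha⟩ := hnil 1 one_pos w
    exact main a w ha
  -- Step: lower the bound by one
  have step : ∀ k : ℤ, 1 ≤ k →
      (∃ v : V, v ≠ 0 ∧ ∀ j : ℤ, k + 1 ≤ j → ⁅e j, v⁆ = 0) →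
      (∃ v : V, v ≠ 0 ∧ ∀ j : ℤ, k ≤ j → ⁅e j, v⁆ = 0) := by
    intro k hk ⟨v, hv, hvk⟩
    have inv : ∀ t : ℕ, ∀ j : ℤ, k + 1 ≤ j →
        ⁅e j, (fun u : V => ⁅e k, u⁆)^[t] v⁆ = 0 := by
      intro t
      induction t with
      | zero => intro j hj; simpa using hvk j hj
      | succ t iht =>
        intro j hj
        rw [Function.iterate_succ_apply']
        have hbr : ⁅e j, e k⁆ = ((k - j : ℤ) : ℂ) • e (j + k) := by
          rw [he, if_neg (by omega), zero_smul, add_zero]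
        calc ⁅e j, ⁅e k, (fun u : V => ⁅e k, u⁆)^[t] v⁆⁆
            = ⁅⁅e j, e k⁆, (fun u : V => ⁅e k, u⁆)^[t] v⁆
              + ⁅e k, ⁅e j, (fun u : V => ⁅e k, u⁆)^[t] v⁆⁆ := by
              rw [leibniz_lie]
          _ = 0 := by
              rw [iht j hj, lie_zero, add_zero, hbr, smul_lie, iht (j+k) (by omega), smul_zero]
    obtain ⟨m, hm⟩ := hnil k (by omega) v
    have hex : ∃ m : ℕ, (fun u : V => ⁅e k, u⁆)^[m] v = 0 := ⟨m, hm⟩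
    set n := Nat.find hex with hndef
    have hn0 : n ≠ 0 := by
      intro h
      have := Nat.find_spec hex
      rw [← hndef] at this
      rw [h] at this
      simp only [Function.iterate_zero, id_eq] at this
      exact hv this
    have hu : (fun u : V => ⁅e k, u⁆)^[n-1] v ≠ 0 := Nat.find_min hex (by omega)
    refine ⟨(fun u : V => ⁅e k, u⁆)^[n-1] v, hu, fun j hj => ?_⟩
    rcases eq_or_lt_of_le hj with hjk | hjk
    · rw [← hjk]
      have : (fun u : V => ⁅e k, u⁆)^[(n-1)+1] v = 0 := by
        have h1 : (n-1)+1 = n := by omega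
        rw [h1]
        exact Nat.find_spec hex
      rw [Function.iterate_succ_apply'] at this
      exact this
    · exact inv (n-1) j (by omega)
  -- Descend from K to 1
  have desc : ∀ d : ℕ,
      (∃ v : V, v ≠ 0 ∧ ∀ j : ℤ, 1 + (d:ℤ) ≤ j → ⁅e j, v⁆ = 0) →
      (∃ v : V, v ≠ 0 ∧ ∀ j : ℤ, 1 ≤ j → ⁅e j, v⁆ = 0) := by
    intro d
    induction d with
    | zero => intro h; simpa using h
    | succ d ihd =>
      intro h
      apply ihd
      apply step (1 + (d:ℤ)) (by omega)
      obtain ⟨v, hv, hvk⟩ := h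
      exact ⟨v, hv, fun j hj => hvk j (by push_cast at hj ⊢; omega)⟩
  obtain ⟨K, hK2, hKe⟩ := claim1 v0
  obtain ⟨v, hv, hve⟩ := desc (K - 1).toNat ⟨v0, hv0, fun j hj => hKe j (by omega)⟩
  exact ⟨v, hv, fun i hi => hve i (by omega)⟩
end

section
/- Let V be a nonzero module over the Heisenberg–Virasoro algebra on which every basis element of n₊ (i.e. each e_i and z_i with i > 0) acts locally nilpotently. Then there exists a nonzero v ∈ V with n₊·v = 0. -/
/-- A nonzero module over the Heisenberg–Virasoro algebra on which every
`e i` and `z i` with `i > 0` acts locally nilpotently contains a nonzero vector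
annihilated by the whole positive part `n₊`. -/
theorem stmt7 (L : Type*) [LieRing L] [LieAlgebra ℂ L]
    (e z : ℤ → L) (c₁ c₂ c₃ : L)
    (hc₁ : ∀ x : L, ⁅c₁, x⁆ = 0) (hc₂ : ∀ x : L, ⁅c₂, x⁆ = 0) (hc₃ : ∀ x : L, ⁅c₃, x⁆ = 0)
    (hee : ∀ i j : ℤ, ⁅e i, e j⁆ =
      ((j - i : ℤ) : ℂ) • e (i + j) + (if i = -j then ((j : ℂ)^3 - j) / 12 else 0) • c₁)
    (hez : ∀ i j : ℤ, ⁅e i, z j⁆ =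
      (j : ℂ) • z (i + j) - (if i = -j then Complex.I * (j : ℂ)^2 else 0) • c₂)
    (hzz : ∀ i j : ℤ, ⁅z i, z j⁆ = (if i = -j then (j : ℂ) else 0) • c₃)
    (V : Type*) [AddCommGroup V] [Module ℂ V] [LieRingModule L V] [LieModule ℂ L V]
    (hV : ∃ v : V, v ≠ 0)
    (hnile : ∀ i : ℤ, 0 < i → ∀ u : V, ∃ m : ℕ, (fun u : V => ⁅e i, u⁆)^[m] u = 0)
    (hnilz : ∀ i : ℤ, 0 < i → ∀ u : V, ∃ m : ℕ, (fun u : V => ⁅z i, u⁆)^[m] u = 0) :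
    ∃ v : V, v ≠ 0 ∧ ∀ i : ℤ, 0 < i → ⁅e i, v⁆ = 0 ∧ ⁅z i, v⁆ = 0 := by
  classical
  -- simplified bracket relations for positive indices
  have heeP : ∀ i j : ℤ, 0 < i → 0 < j → ⁅e i, e j⁆ = ((j - i : ℤ) : ℂ) • e (i + j) := by
    intro i j hi hj
    rw [hee, if_neg (by omega), zero_smul, add_zero]
  have hezP : ∀ i j : ℤ, 0 < i → 0 < j → ⁅e i, z j⁆ = ((j : ℤ) : ℂ) • z (i + j) := by
    intro i j hi hj
    rw [hez, if_neg (by omega), zero_smul, sub_zero]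
  have hzzP : ∀ i j : ℤ, 0 < i → 0 < j → ⁅z i, z j⁆ = 0 := by
    intro i j hi hj
    rw [hzz, if_neg (by omega), zero_smul]
  -- kernel extraction from a locally nilpotent operator preserving a predicate
  have ext : ∀ (Q : V → Prop) (x : L), (∀ u, Q u → Q ⁅x, u⁆) →
      ∀ (m : ℕ) (w : V), w ≠ 0 → Q w → (fun u : V => ⁅x, u⁆)^[m] w = 0 →
      ∃ w', w' ≠ 0 ∧ Q w' ∧ ⁅x, w'⁆ = 0 := by
    intro Q x hQ m
    induction m with
    | zero =>
      intro w hw _ h0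
      simp only [Function.iterate_zero, id_eq] at h0
      exact absurd h0 hw
    | succ m ih =>
      intro w hw hQw h0
      by_cases hx : ⁅x, w⁆ = 0
      · exact ⟨w, hw, hQw, hx⟩
      · exact ih ⁅x, w⁆ hx (hQ w hQw) (by rw [← Function.iterate_succ_apply]; exact h0)
  -- once an iterate kills, all later iterates kill
  have hiter : ∀ (x : L) (w : V) (m : ℕ), (fun u : V => ⁅x, u⁆)^[m] w = 0 →
      ∀ k, m ≤ k → (fun u : V => ⁅x, u⁆)^[k] w = 0 := by
    intro x w m hm k hk
    rw [← Nat.sub_add_cancel hk, Function.iterate_add_apply, hm]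
    exact Function.iterate_fixed (by simp) _
  -- key identity: if ⁅e 1, u⁆ = 0 then high z's on u are iterates of e₁ on ⁅z 1, u⁆
  have keyZ : ∀ u : V, ⁅e 1, u⁆ = 0 → ∀ k : ℕ, ∃ d : ℂ,
      ⁅z (1 + (k : ℤ)), u⁆ = d • (fun w : V => ⁅e 1, w⁆)^[k] ⁅z 1, u⁆ := by
    intro u hu k
    induction k with
    | zero => exact ⟨1, by norm_num⟩
    | succ k ih =>
      obtain ⟨d, hd⟩ := ih
      have hne : ((1 + (k : ℤ) : ℤ) : ℂ) ≠ 0 := by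
        rw [Int.cast_ne_zero]; omega
      refine ⟨((1 + (k : ℤ) : ℤ) : ℂ)⁻¹ * d, ?_⟩
      have h1 : ⁅e 1, z (1 + (k : ℤ))⁆ = ((1 + (k : ℤ) : ℤ) : ℂ) • z (1 + (1 + (k : ℤ))) :=
        hezP 1 (1 + (k : ℤ)) one_pos (by omega)
      have hidx : (1 + ((k + 1 : ℕ) : ℤ)) = 1 + (1 + (k : ℤ)) := by push_cast; ring
      rw [hidx]
      have h3 : ((1 + (k : ℤ) : ℤ) : ℂ) • ⁅z (1 + (1 + (k : ℤ))), u⁆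
          = d • (fun w : V => ⁅e 1, w⁆)^[k + 1] ⁅z 1, u⁆ := by
        rw [← smul_lie, ← h1, lie_lie, hu, lie_zero, sub_zero, hd, lie_smul,
          Function.iterate_succ_apply']
      calc ⁅z (1 + (1 + (k : ℤ))), u⁆
          = ((1 + (k : ℤ) : ℤ) : ℂ)⁻¹ • (((1 + (k : ℤ) : ℤ) : ℂ) • ⁅z (1 + (1 + (k : ℤ))), u⁆) := by
            rw [smul_smul, inv_mul_cancel₀ hne, one_smul]
        _ = ((1 + (k : ℤ) : ℤ) : ℂ)⁻¹ • (d • (fun w : V => ⁅e 1, w⁆)^[k + 1] ⁅z 1, u⁆) := by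
            rw [h3]
        _ = _ := by rw [smul_smul]
  -- key identity: if ⁅e 1, u⁆ = 0 then high e's on u are iterates of e₁ on ⁅e 2, u⁆
  have keyE : ∀ u : V, ⁅e 1, u⁆ = 0 → ∀ k : ℕ, ∃ d : ℂ,
      ⁅e (2 + (k : ℤ)), u⁆ = d • (fun w : V => ⁅e 1, w⁆)^[k] ⁅e 2, u⁆ := by
    intro u hu k
    induction k with
    | zero => exact ⟨1, by norm_num⟩
    | succ k ih =>
      obtain ⟨d, hd⟩ := ih
      have hne : (((2 + (k : ℤ)) - 1 : ℤ) : ℂ) ≠ 0 := by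
        rw [Int.cast_ne_zero]; omega
      refine ⟨(((2 + (k : ℤ)) - 1 : ℤ) : ℂ)⁻¹ * d, ?_⟩
      have h1 : ⁅e 1, e (2 + (k : ℤ))⁆ = (((2 + (k : ℤ)) - 1 : ℤ) : ℂ) • e (1 + (2 + (k : ℤ))) :=
        heeP 1 (2 + (k : ℤ)) one_pos (by omega)
      have hidx : (2 + ((k + 1 : ℕ) : ℤ)) = 1 + (2 + (k : ℤ)) := by push_cast; ring
      rw [hidx]
      have h3 : (((2 + (k : ℤ)) - 1 : ℤ) : ℂ) • ⁅e (1 + (2 + (k : ℤ))), u⁆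
          = d • (fun w : V => ⁅e 1, w⁆)^[k + 1] ⁅e 2, u⁆ := by
        rw [← smul_lie, ← h1, lie_lie, hu, lie_zero, sub_zero, hd, lie_smul,
          Function.iterate_succ_apply']
      calc ⁅e (1 + (2 + (k : ℤ))), u⁆
          = (((2 + (k : ℤ)) - 1 : ℤ) : ℂ)⁻¹ •
              ((((2 + (k : ℤ)) - 1 : ℤ) : ℂ) • ⁅e (1 + (2 + (k : ℤ))), u⁆) := by
            rw [smul_smul, inv_mul_cancel₀ hne, one_smul]
        _ = (((2 + (k : ℤ)) - 1 : ℤ) : ℂ)⁻¹ • (d • (fun w : V => ⁅e 1, w⁆)^[k + 1] ⁅e 2, u⁆) := by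
            rw [h3]
        _ = _ := by rw [smul_smul]
  -- descent step: from killing all degrees ≥ n+1 to killing all degrees ≥ n
  have step : ∀ n : ℤ, 1 ≤ n → ∀ w : V, w ≠ 0 →
      (∀ i : ℤ, n + 1 ≤ i → ⁅e i, w⁆ = 0 ∧ ⁅z i, w⁆ = 0) →
      ∃ w' : V, w' ≠ 0 ∧ ∀ i : ℤ, n ≤ i → ⁅e i, w'⁆ = 0 ∧ ⁅z i, w'⁆ = 0 := by
    intro n hn w hw hP
    have invE : ∀ x : V, (∀ i : ℤ, n + 1 ≤ i → ⁅e i, x⁆ = 0 ∧ ⁅z i, x⁆ = 0) →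
        (∀ i : ℤ, n + 1 ≤ i → ⁅e i, ⁅e n, x⁆⁆ = 0 ∧ ⁅z i, ⁅e n, x⁆⁆ = 0) := by
      intro x hx i hi
      constructor
      · rw [leibniz_lie, (hx i hi).1, lie_zero, add_zero, heeP i n (by omega) (by omega),
          smul_lie, (hx (i + n) (by omega)).1, smul_zero]
      · rw [leibniz_lie, (hx i hi).2, lie_zero, add_zero, ← lie_skew (z i) (e n),
          hezP n i (by omega) (by omega), neg_lie, smul_lie, (hx (n + i) (by omega)).2,
          smul_zero, neg_zero]
    obtain ⟨m, hm⟩ := hnile n (by omega) w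
    obtain ⟨w₁, hw₁0, hw₁P, hw₁e⟩ := ext _ (e n) invE m w hw hP hm
    have invZ : ∀ x : V,
        ((∀ i : ℤ, n + 1 ≤ i → ⁅e i, x⁆ = 0 ∧ ⁅z i, x⁆ = 0) ∧ ⁅e n, x⁆ = 0) →
        ((∀ i : ℤ, n + 1 ≤ i → ⁅e i, ⁅z n, x⁆⁆ = 0 ∧ ⁅z i, ⁅z n, x⁆⁆ = 0) ∧
          ⁅e n, ⁅z n, x⁆⁆ = 0) := by
      intro x hx
      obtain ⟨hxP, hxe⟩ := hx
      refine ⟨fun i hi => ?_, ?_⟩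
      · constructor
        · rw [leibniz_lie, (hxP i hi).1, lie_zero, add_zero, hezP i n (by omega) (by omega),
            smul_lie, (hxP (i + n) (by omega)).2, smul_zero]
        · rw [leibniz_lie, (hxP i hi).2, lie_zero, add_zero,
            hzzP i n (by omega) (by omega), zero_lie]
      · rw [leibniz_lie, hxe, lie_zero, add_zero, hezP n n (by omega) (by omega),
          smul_lie, (hxP (n + n) (by omega)).2, smul_zero]
    obtain ⟨m', hm'⟩ := hnilz n (by omega) w₁
    obtain ⟨w₂, hw₂0, hw₂Q, hw₂z⟩ := ext _ (z n) invZ m' w₁ hw₁0 ⟨hw₁P, hw₁e⟩ hm'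
    refine ⟨w₂, hw₂0, fun i hi => ?_⟩
    rcases eq_or_lt_of_le hi with h | h
    · rw [← h]
      exact ⟨hw₂Q.2, hw₂z⟩
    · exact hw₂Q.1 i (by omega)
  -- full descent
  have desc : ∀ k : ℕ, ∀ w : V, w ≠ 0 →
      (∀ i : ℤ, 1 + (k : ℤ) ≤ i → ⁅e i, w⁆ = 0 ∧ ⁅z i, w⁆ = 0) →
      ∃ w' : V, w' ≠ 0 ∧ ∀ i : ℤ, 1 ≤ i → ⁅e i, w'⁆ = 0 ∧ ⁅z i, w'⁆ = 0 := by
    intro k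
    induction k with
    | zero =>
      intro w hw hP
      exact ⟨w, hw, fun i hi => hP i (by omega)⟩
    | succ k ih =>
      intro w hw hP
      obtain ⟨w', hw'0, hw'⟩ := step (1 + (k : ℤ)) (by omega) w hw
        (fun i hi => hP i (by push_cast at hi ⊢; omega))
      exact ih w' hw'0 hw'
  -- assemble
  obtain ⟨v₀, hv₀⟩ := hV
  obtain ⟨m₀, hm₀⟩ := hnile 1 one_pos v₀
  obtain ⟨u, hu0, -, hue⟩ := ext (fun _ => True) (e 1) (fun _ _ => trivial) m₀ v₀ hv₀ trivial hm₀
  obtain ⟨m₁, hm₁⟩ := hnile 1 one_pos ⁅z 1, u⁆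
  obtain ⟨m₂, hm₂⟩ := hnile 1 one_pos ⁅e 2, u⁆
  have hPN : ∀ i : ℤ, 1 + ((max m₁ m₂ + 1 : ℕ) : ℤ) ≤ i → ⁅e i, u⁆ = 0 ∧ ⁅z i, u⁆ = 0 := by
    intro i hi
    have hm₁i : (m₁ : ℤ) + 2 ≤ i := by
      have := Nat.le_max_left m₁ m₂
      omega
    have hm₂i : (m₂ : ℤ) + 2 ≤ i := by
      have := Nat.le_max_right m₁ m₂
      omega
    constructor
    · obtain ⟨d, hd⟩ := keyE u hue (i - 2).toNat
      have h2 : (2 + (((i - 2).toNat : ℕ) : ℤ)) = i := by omega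
      rw [h2] at hd
      rw [hd, hiter (e 1) ⁅e 2, u⁆ m₂ hm₂ _ (by omega), smul_zero]
    · obtain ⟨d, hd⟩ := keyZ u hue (i - 1).toNat
      have h2 : (1 + (((i - 1).toNat : ℕ) : ℤ)) = i := by omega
      rw [h2] at hd
      rw [hd, hiter (e 1) ⁅z 1, u⁆ m₁ hm₁ _ (by omega), smul_zero]
  obtain ⟨v, hv, hPv⟩ := desc (max m₁ m₂ + 1) u hu0 hPN
  exact ⟨v, hv, fun i hi => hPv i (by omega)⟩
end

section
/- Every endomorphism of a simple module over a countably generated associative ℂ-algebra is multiplication by a scalar. -/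
open Polynomial in
/-- Auxiliary: in a division ring `D` which is a `ℂ`-algebra of rank `≤ ℵ₀`,
every element is integral over `ℂ`. -/
theorem aux_integral {D : Type*} [DivisionRing D] [Algebra ℂ D]
    (hrank : Module.rank ℂ D ≤ Cardinal.aleph0) (x : D) : IsIntegral ℂ x := by
  classical
  by_contra hninteg
  have hx : Transcendental ℂ x := fun halg => hninteg halg.isIntegral
  -- the commutative subfield: double centralizer of `ℂ ∪ {x}`
  set S1 : Set D := Set.range (algebraMap ℂ D) ∪ {x} with hS1
  have hS1comm : ∀ a ∈ S1, ∀ b ∈ S1, a * b = b * a := by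
    rintro a (⟨r, rfl⟩ | rfl) b (⟨s, rfl⟩ | rfl)
    · rw [← map_mul, ← map_mul, mul_comm]
    · exact Algebra.commutes r b
    · exact (Algebra.commutes s a).symm
    · rfl
  set C1 : Subring D := Subring.centralizer S1 with hC1
  have hS1C1 : S1 ⊆ (C1 : Set D) := fun a ha =>
    Subring.mem_centralizer_iff.2 fun b hb => hS1comm b hb a ha
  have hsub : (Subring.centralizer (C1 : Set D) : Set D) ⊆ (C1 : Set D) := by
    intro a ha
    exact Subring.mem_centralizer_iff.2 fun b hb =>
      (Subring.mem_centralizer_iff.1 ha) b (hS1C1 hb)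
  let K : Subfield D :=
    { Subring.centralizer (C1 : Set D) with
      inv_mem' := by
        intro a ha
        refine Subring.mem_centralizer_iff.2 fun b hb => ?_
        have h := (Subring.mem_centralizer_iff.1 ha) b hb
        have hc : Commute b a := h
        exact hc.inv_right₀.eq }
  have hmemK : ∀ a : D, a ∈ K ↔ a ∈ Subring.centralizer (C1 : Set D) := fun a => Iff.rfl
  letI : Field K :=
    { (inferInstance : DivisionRing K) with
      mul_comm := by
        rintro ⟨a, ha⟩ ⟨b, hb⟩
        ext
        exact ((Subring.mem_centralizer_iff.1 ha) b (hsub hb)).symm }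
  have halgmem : ∀ r : ℂ, algebraMap ℂ D r ∈ K := fun r =>
    Subring.mem_centralizer_iff.2 fun b hb =>
      ((Subring.mem_centralizer_iff.1 hb) _ (Or.inl ⟨r, rfl⟩)).symm
  have hxK : x ∈ K := Subring.mem_centralizer_iff.2 fun b hb =>
    ((Subring.mem_centralizer_iff.1 hb) _ (Or.inr rfl)).symm
  letI : Algebra ℂ K := ((algebraMap ℂ D).codRestrict K.toSubring halgmem).toAlgebra
  let j : K →ₐ[ℂ] D := { toRingHom := K.subtype, commutes' := fun r => rfl }
  have hj : Function.Injective j := Subtype.val_injective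
  set x' : K := ⟨x, hxK⟩ with hx'
  have hjx : j x' = x := rfl
  have htx' : Transcendental ℂ x' := by
    rw [transcendental_iff] at hx ⊢
    intro p hp
    apply hx
    rw [← hjx, Polynomial.aeval_algHom_apply, hp, map_zero]
  have li := htx'.linearIndependent_sub_inv
  have li2 := li.map' j.toLinearMap (LinearMap.ker_eq_bot.2 hj)
  have hcard := li2.cardinal_lift_le_rank
  have h2 : Cardinal.lift.{0} (Module.rank ℂ D) ≤ Cardinal.aleph0 := by
    simpa using hrank
  have h3 := hcard.trans h2
  rw [Cardinal.lift_le_aleph0, Cardinal.mk_complex] at h3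
  exact (Cardinal.aleph0_lt_continuum.not_ge h3)

/-- Every endomorphism of a simple module over a countably generated
associative `ℂ`-algebra is multiplication by a scalar. -/
theorem stmt9 (A : Type*) [Ring A] [Algebra ℂ A]
    (hA : ∃ S : Set A, S.Countable ∧ Algebra.adjoin ℂ S = ⊤)
    (M : Type*) [AddCommGroup M] [Module A M] [IsSimpleModule A M]
    (f : M →ₗ[A] M) :
    ∃ c : ℂ, ∀ m : M, f m = algebraMap ℂ A c • m := by
  classical
  obtain ⟨S, hSc, hSt⟩ := hA
  letI : Module ℂ M := Module.compHom M (algebraMap ℂ A)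
  haveI : SMulCommClass A ℂ M :=
    ⟨fun a c m => by
      show a • (algebraMap ℂ A c • m) = algebraMap ℂ A c • (a • m)
      rw [← mul_smul, ← mul_smul, Algebra.commutes]⟩
  haveI := IsSimpleModule.nontrivial A M
  obtain ⟨m₀, hm₀⟩ := exists_ne (0 : M)
  -- rank of M over ℂ is at most ℵ₀
  have hTc : (Submonoid.closure S : Set A).Countable := by
    haveI : Countable S := hSc.to_subtype
    apply Set.Countable.mono ?_
      (Set.countable_range fun l : List S => (l.map Subtype.val).prod)
    intro a ha
    obtain ⟨l, hl, rfl⟩ := Submonoid.exists_list_of_mem_closure ha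
    refine ⟨l.pmap (fun y hy => (⟨y, hy⟩ : S)) hl, ?_⟩
    simp [List.map_pmap]
  have hrankA : Module.rank ℂ A ≤ Cardinal.aleph0 := by
    have hspan : Submodule.span ℂ (Submonoid.closure S : Set A) = ⊤ := by
      have := Algebra.adjoin_eq_span (R := ℂ) (s := S)
      rw [hSt] at this
      rw [← this]; rfl
    haveI := hTc.to_subtype
    calc Module.rank ℂ A = Module.rank ℂ (⊤ : Submodule ℂ A) := (rank_top ℂ A).symm
      _ = Module.rank ℂ (Submodule.span ℂ (Submonoid.closure S : Set A)) := by rw [hspan]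
      _ ≤ Cardinal.mk (Submonoid.closure S : Set A) := rank_span_le (R := ℂ) _
      _ ≤ Cardinal.aleph0 := Cardinal.mk_le_aleph0
  have hspan₀ : Submodule.span A ({m₀} : Set M) = ⊤ := by
    rcases eq_bot_or_eq_top (Submodule.span A ({m₀} : Set M)) with h | h
    · exact absurd ((Submodule.span_singleton_eq_bot).1 h) hm₀
    · exact h
  let φ : A →ₗ[ℂ] M :=
    { toFun := fun a => a • m₀
      map_add' := fun a b => add_smul a b m₀
      map_smul' := fun c a => by
        show (c • a) • m₀ = algebraMap ℂ A c • (a • m₀)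
        rw [Algebra.smul_def, mul_smul] }
  have hφ : Function.Surjective φ := by
    intro m
    have : m ∈ Submodule.span A ({m₀} : Set M) := hspan₀ ▸ Submodule.mem_top
    obtain ⟨a, ha⟩ := Submodule.mem_span_singleton.1 this
    exact ⟨a, ha⟩
  have hrankM : Module.rank ℂ M ≤ Cardinal.aleph0 := by
    have h1 := φ.lift_rank_le_of_surjective hφ
    exact Cardinal.lift_le_aleph0.1 (h1.trans (Cardinal.lift_le_aleph0.2 hrankA))
  -- the endomorphism ring
  letI : DivisionRing (M →ₗ[A] M) := Module.End.instDivisionRing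
  let e : (M →ₗ[A] M) →ₗ[ℂ] M :=
    { toFun := fun g => g m₀
      map_add' := fun g h => rfl
      map_smul' := fun c g => rfl }
  have he : Function.Injective e := by
    intro g h hgh
    have h0 : (g - h) m₀ = 0 := by
      rw [LinearMap.sub_apply, sub_eq_zero]; exact hgh
    rcases eq_bot_or_eq_top (LinearMap.ker (g - h)) with hk | hk
    · exfalso
      apply hm₀
      have : m₀ ∈ LinearMap.ker (g - h) := h0
      rwa [hk, Submodule.mem_bot] at this
    · have : g - h = 0 := LinearMap.ker_eq_top.1 hk
      rwa [sub_eq_zero] at this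
  have hrankD : Module.rank ℂ (M →ₗ[A] M) ≤ Cardinal.aleph0 :=
    (e.rank_le_of_injective he).trans hrankM
  haveI : IsScalarTower ℂ A M :=
    ⟨fun c a m => by
      show (c • a) • m = algebraMap ℂ A c • (a • m)
      rw [Algebra.smul_def, mul_smul]⟩
  letI : Algebra ℂ (M →ₗ[A] M) := Module.End.instAlgebra ℂ A M
  have hint : ∀ x : M →ₗ[A] M, IsIntegral ℂ x := fun x =>
    aux_integral (by exact hrankD) x
  haveI : Algebra.IsIntegral ℂ (M →ₗ[A] M) := ⟨hint⟩
  obtain ⟨c, hc⟩ := (IsAlgClosed.algebraMap_bijective_of_isIntegral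
    (k := ℂ) (K := M →ₗ[A] M)).2 f
  refine ⟨c, fun m => ?_⟩
  rw [← hc]
  show algebraMap ℂ (Module.End A M) c m = algebraMap ℂ A c • m
  rw [Module.algebraMap_end_apply]
  rfl
end

section
/- Define the Heisenberg Lie algebra 𝔥 with basis {z_i : i ∈ ℤ} and bracket [z_i,z_j] = j·δ_{i,−j}·z_0. Let I = {ε : ℕ → ℕ≥1 : ε_i = 2 for all sufficiently large i} and let V be the ℂ-vector space with basis {v_ε : ε ∈ I}. The formulas z_0·v_ε = v_ε; for i > 0: z_i·v_ε = 0 if ε_i = 1 and z_i·v_ε = v_{ε − δ_i} if ε_i > 1 (subtract 1 in position i); for i < 0: z_i·v_ε = i·ε_{−i}·v_{ε + δ_{−i}} (add 1 in position −i), define a representation of 𝔥 on V. -/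
/-- The index set `I`: sequences of positive integers that are eventually `2`
(positions `1, 2, …` are the relevant ones; we index by `ℕ`). -/
def HIdx : Type := {ε : ℕ → ℕ // (∀ n, 1 ≤ ε n) ∧ ∃ N, ∀ n ≥ N, ε n = 2}

/-- The underlying space `V` with basis `{v_ε : ε ∈ I}`. -/
abbrev HV : Type := HIdx →₀ ℂ

/-- Change the value of `ε` at position `k` to `m ≥ 1`. -/
def HIdx.upd (ε : HIdx) (k : ℕ) (m : ℕ) (hm : 1 ≤ m) : HIdx :=
  ⟨Function.update ε.1 k m, by
    constructor
    · intro n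
      rcases eq_or_ne n k with rfl | h
      · simpa [Function.update] using hm
      · simpa [Function.update, h] using ε.2.1 n
    · obtain ⟨N, hN⟩ := ε.2.2
      exact ⟨max N (k + 1), fun n hn => by
        have h1 : N ≤ n := le_trans (le_max_left _ _) hn
        have h2 : n ≠ k := by
          have := le_trans (le_max_right _ _) hn; omega
        simpa [Function.update, h2] using hN n h1⟩⟩

/-- The image of the basis vector `v_ε` under `z_i`:
`z_0·v_ε = v_ε`; for `i > 0`, `z_i·v_ε = 0` if `ε_i = 1` and `v_{ε-δ_i}` if `ε_i > 1`;
for `i < 0`, `z_i·v_ε = i·ε_{-i}·v_{ε+δ_{-i}}`. -/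
noncomputable def htarget (i : ℤ) (ε : HIdx) : HV :=
  if i = 0 then Finsupp.single ε 1
  else if 0 < i then
    (if h : 2 ≤ ε.1 i.toNat then
      Finsupp.single (ε.upd i.toNat (ε.1 i.toNat - 1) (by omega)) 1
    else 0)
  else ((i : ℂ) * (ε.1 (-i).toNat : ℂ)) •
    Finsupp.single (ε.upd (-i).toNat (ε.1 (-i).toNat + 1) (by omega)) 1

/-- The linear action of `z_i` on `V`, extended from the basis by linearity. -/
noncomputable def hAct (i : ℤ) : HV →ₗ[ℂ] HV :=
  Finsupp.lsum ℂ fun ε => LinearMap.toSpanSingleton ℂ HV (htarget i ε)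

lemma HIdx.ext' {a b : HIdx} (h : ∀ n, a.1 n = b.1 n) : a = b := Subtype.ext (funext h)

@[simp] lemma HIdx.upd_apply (ε : HIdx) (k m : ℕ) (hm : 1 ≤ m) (n : ℕ) :
    (ε.upd k m hm).1 n = if n = k then m else ε.1 n := by
  simp [HIdx.upd, Function.update]

lemma HIdx.upd_comm (ε : HIdx) {k l : ℕ} (h : k ≠ l) (m m' : ℕ) (hm : 1 ≤ m) (hm' : 1 ≤ m') :
    (ε.upd k m hm).upd l m' hm' = (ε.upd l m' hm').upd k m hm :=
  HIdx.ext' fun n => by simp only [HIdx.upd_apply]; split_ifs <;> first | rfl | omega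

lemma hAct_single (i : ℤ) (ε : HIdx) (c : ℂ) :
    hAct i (Finsupp.single ε c) = c • htarget i ε := by
  simp [hAct]

lemma hAct_zero (v : HV) : hAct 0 v = v := by
  induction v using Finsupp.induction_linear with
  | zero => simp
  | add a b ha hb => simp [ha, hb]
  | single ε c => simp [hAct_single, htarget]

lemma htarget_pos {i : ℤ} (hi : 0 < i) (ε : HIdx) : htarget i ε =
    if _ : 2 ≤ ε.1 i.toNat then
      Finsupp.single (ε.upd i.toNat (ε.1 i.toNat - 1) (by omega)) 1 else 0 := by
  rw [htarget, if_neg hi.ne', if_pos hi]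

lemma htarget_neg {i : ℤ} (hi : i < 0) (ε : HIdx) : htarget i ε =
    ((i : ℂ) * (ε.1 (-i).toNat : ℂ)) •
      Finsupp.single (ε.upd (-i).toNat (ε.1 (-i).toNat + 1) (by omega)) 1 := by
  rw [htarget, if_neg hi.ne, if_neg (by omega)]
lemma htarget_zero (ε : HIdx) : htarget 0 ε = Finsupp.single ε 1 := by
  rw [htarget, if_pos rfl]

lemma smul_single_eq {c d : ℂ} {A B : HIdx} (hAB : A = B) (hcd : c = d) :
    c • Finsupp.single A (1:ℂ) = d • Finsupp.single B 1 := by rw [hAB, hcd]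

set_option maxHeartbeats 1000000 in
lemma hkey (i j : ℤ) (ε : HIdx) :
    hAct i (htarget j ε) - hAct j (htarget i ε) =
      (if i = -j then (j : ℂ) else 0) • Finsupp.single ε 1 := by
  rcases eq_or_ne i j with rfl | hij
  · rw [sub_self]
    rcases eq_or_ne i (-i) with h | h
    · rw [if_pos h, show i = 0 by omega]; simp
    · rw [if_neg h, zero_smul]
  rcases eq_or_ne i 0 with rfl | hi0
  · rw [hAct_zero, htarget_zero, hAct_single, one_smul, sub_self,
      if_neg (by omega), zero_smul]
  rcases eq_or_ne j 0 with rfl | hj0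
  · rw [htarget_zero, hAct_single, one_smul, hAct_zero, sub_self]
    split_ifs <;> simp
  rcases hi0.lt_or_gt with hi | hi <;> rcases hj0.lt_or_gt with hj | hj
  · -- i < 0, j < 0
    have hne : (-i).toNat ≠ (-j).toNat := by omega
    rw [if_neg (by omega), zero_smul, sub_eq_zero, htarget_neg hi, htarget_neg hj,
      map_smul, map_smul, hAct_single, hAct_single, one_smul, one_smul,
      htarget_neg hi, htarget_neg hj, smul_smul, smul_smul]
    refine smul_single_eq (HIdx.ext' fun n => ?_) ?_
    · simp only [HIdx.upd_apply, if_neg hne, if_neg hne.symm]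
      split_ifs <;> first | rfl | omega
    · simp only [HIdx.upd_apply, if_neg hne, if_neg hne.symm]; all_goals ring
  · -- i < 0, 0 < j
    rcases eq_or_ne i (-j) with hij' | hij'
    · -- i = -j
      have hk : (-i).toNat = j.toNat := by omega
      have hji : (j : ℂ) = -(i : ℂ) := by
        have : j = -i := by omega
        rw [this]; push_cast; ring
      have e2 : hAct j (htarget i ε) =
          ((i : ℂ) * (ε.1 (-i).toNat : ℂ)) • Finsupp.single ε 1 := by
        rw [htarget_neg hi, map_smul, hAct_single, one_smul, htarget_pos hj,
          dif_pos (by have := ε.2.1 j.toNat; simp [hk]; omega)]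
        refine smul_single_eq (HIdx.ext' fun n => ?_) rfl
        simp only [HIdx.upd_apply, hk]
        rcases eq_or_ne n j.toNat with rfl | h
        · simp
        · simp [h]
      by_cases hεj : 2 ≤ ε.1 j.toNat
      · have e1 : hAct i (htarget j ε) =
            ((i : ℂ) * ((ε.1 (-i).toNat : ℂ) - 1)) • Finsupp.single ε 1 := by
          rw [htarget_pos hj, dif_pos hεj, hAct_single, one_smul, htarget_neg hi]
          refine smul_single_eq (HIdx.ext' fun n => ?_) ?_
          · simp only [HIdx.upd_apply, hk]
            rcases eq_or_ne n j.toNat with rfl | h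
            · simp; omega
            · simp [h]
          · simp [hk, Nat.cast_sub (show 1 ≤ ε.1 j.toNat from by omega)]
        rw [if_pos hij', e1, e2, ← sub_smul]
        congr 1
        rw [hji]; ring
      · have e1 : hAct i (htarget j ε) = 0 := by
          rw [htarget_pos hj, dif_neg hεj, map_zero]
        have hε1 : ε.1 (-i).toNat = 1 := by
          have := ε.2.1 j.toNat; rw [hk]; omega
        rw [if_pos hij', e1, e2, zero_sub, ← neg_smul]
        congr 1
        rw [hε1, hji]; push_cast; ring
    · -- i ≠ -j
      have hne : (-i).toNat ≠ j.toNat := by omega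
      rw [if_neg hij', zero_smul, sub_eq_zero]
      by_cases hεj : 2 ≤ ε.1 j.toNat
      · rw [htarget_pos hj, dif_pos hεj, hAct_single, one_smul, htarget_neg hi,
          htarget_neg hi, map_smul, hAct_single, one_smul, htarget_pos hj,
          dif_pos (by have := ε.2.1 j.toNat; simp [hne.symm]; omega)]
        refine smul_single_eq (HIdx.ext' fun n => ?_) ?_
        · simp only [HIdx.upd_apply, if_neg hne, if_neg hne.symm]
          split_ifs <;> first | rfl | omega
        · simp only [HIdx.upd_apply, if_neg hne, if_neg hne.symm]; all_goals ring
      · rw [htarget_pos hj, dif_neg hεj, map_zero, htarget_neg hi, map_smul,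
          hAct_single, one_smul, htarget_pos hj, dif_neg (by simp [hne.symm]; omega),
          smul_zero]
  · -- 0 < i, j < 0
    rcases eq_or_ne i (-j) with hij' | hij'
    · -- i = -j
      have hk : (-j).toNat = i.toNat := by omega
      have hji : (j : ℂ) = -(i : ℂ) := by
        have : j = -i := by omega
        rw [this]; push_cast; ring
      have e1 : hAct i (htarget j ε) =
          ((j : ℂ) * (ε.1 (-j).toNat : ℂ)) • Finsupp.single ε 1 := by
        rw [htarget_neg hj, map_smul, hAct_single, one_smul, htarget_pos hi,
          dif_pos (by have := ε.2.1 i.toNat; simp [hk]; omega)]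
        refine smul_single_eq (HIdx.ext' fun n => ?_) rfl
        simp only [HIdx.upd_apply, hk]
        rcases eq_or_ne n i.toNat with rfl | h
        · simp
        · simp [h]
      by_cases hεi : 2 ≤ ε.1 i.toNat
      · have e2 : hAct j (htarget i ε) =
            ((j : ℂ) * ((ε.1 (-j).toNat : ℂ) - 1)) • Finsupp.single ε 1 := by
          rw [htarget_pos hi, dif_pos hεi, hAct_single, one_smul, htarget_neg hj]
          refine smul_single_eq (HIdx.ext' fun n => ?_) ?_
          · simp only [HIdx.upd_apply, hk]
            rcases eq_or_ne n i.toNat with rfl | h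
            · simp; omega
            · simp [h]
          · simp [hk, Nat.cast_sub (show 1 ≤ ε.1 i.toNat from by omega)]
        rw [if_pos hij', e1, e2, ← sub_smul]
        congr 1
        ring
      · have e2 : hAct j (htarget i ε) = 0 := by
          rw [htarget_pos hi, dif_neg hεi, map_zero]
        have hε1 : ε.1 (-j).toNat = 1 := by
          have := ε.2.1 i.toNat; rw [hk]; omega
        rw [if_pos hij', e1, e2, sub_zero]
        congr 1
        rw [hε1]; push_cast; ring
    · -- i ≠ -j
      have hne : i.toNat ≠ (-j).toNat := by omega
      rw [if_neg hij', zero_smul, sub_eq_zero]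
      by_cases hεi : 2 ≤ ε.1 i.toNat
      · rw [htarget_neg hj, map_smul, hAct_single, one_smul, htarget_pos hi,
          dif_pos (by have := ε.2.1 i.toNat; simp [hne]; omega), htarget_pos hi,
          dif_pos hεi, hAct_single, one_smul, htarget_neg hj]
        refine smul_single_eq (HIdx.ext' fun n => ?_) ?_
        · simp only [HIdx.upd_apply, if_neg hne, if_neg hne.symm]
          split_ifs <;> first | rfl | omega
        · simp only [HIdx.upd_apply, if_neg hne, if_neg hne.symm]; all_goals ring
      · rw [htarget_neg hj, map_smul, hAct_single, one_smul, htarget_pos hi,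
          dif_neg (by simp [hne]; omega), htarget_pos hi, dif_neg hεi, map_zero,
          smul_zero]
  · -- 0 < i, 0 < j
    have hne : i.toNat ≠ j.toNat := by omega
    rw [if_neg (by omega), zero_smul, sub_eq_zero, htarget_pos hi, htarget_pos hj]
    by_cases hεj : 2 ≤ ε.1 j.toNat <;> by_cases hεi : 2 ≤ ε.1 i.toNat
    · rw [dif_pos hεj, dif_pos hεi, hAct_single, hAct_single, one_smul, one_smul,
        htarget_pos hi, htarget_pos hj]
      rw [dif_pos (by simpa [hne] using hεi), dif_pos (by simpa [hne.symm] using hεj)]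
      refine congrArg (fun a => Finsupp.single a (1:ℂ)) (HIdx.ext' fun n => ?_)
      simp only [HIdx.upd_apply, if_neg hne, if_neg hne.symm]
      split_ifs <;> first | rfl | omega
    · rw [dif_pos hεj, dif_neg hεi, hAct_single, one_smul, map_zero, htarget_pos hi,
        dif_neg (by simpa [hne] using hεi)]
    · rw [dif_neg hεj, dif_pos hεi, map_zero, hAct_single, one_smul, htarget_pos hj,
        dif_neg (by simpa [hne.symm] using hεj)]
    · rw [dif_neg hεj, dif_neg hεi, map_zero, map_zero]
/-- the formulas define a representation of the Heisenberg Lie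
algebra (basis `{z_i}`, `[z_i,z_j] = j·δ_{i,-j}·z_0`) on `V`: the operators `hAct i`
satisfy the defining bracket relations. -/
theorem stmt13 (i j : ℤ) (v : HV) :
    hAct i (hAct j v) - hAct j (hAct i v) =
      (if i = -j then (j : ℂ) else 0) • hAct 0 v := by
  induction v using Finsupp.induction_linear with
  | zero => simp
  | add a b ha hb =>
    simp only [map_add, smul_add]
    rw [← ha, ← hb]; abel
  | single ε c =>
    rw [hAct_single, hAct_single, map_smul, map_smul, ← smul_sub, hkey, hAct_zero,
      smul_comm]
    simp [Finsupp.smul_single]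
end

section
/- On the Heisenberg module V above, every nonzero vector u generates an infinite-dimensional n₊-submodule, where n₊ = span{z_i : i > 0}. In particular there is no nonzero v ∈ V with n₊·v = 0. -/
/-- Lowering map on indices: set position `m` to `1`. -/
def hg (m : ℕ) : HIdx → HIdx := fun ε => ε.upd m 1 le_rfl

lemma hg_coe (m : ℕ) (ε : HIdx) (n : ℕ) :
    (hg m ε).1 n = if n = m then 1 else ε.1 n := by
  simp [hg, HIdx.upd, Function.update_apply]

lemma htarget_pos_s16 (m : ℕ) (hm : 0 < m) (ε : HIdx) (h : ε.1 m = 2) :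
    htarget (m : ℤ) ε = Finsupp.single (hg m ε) 1 := by
  have h0 : (m : ℤ) ≠ 0 := by exact_mod_cast hm.ne'
  have h1 : (0 : ℤ) < (m : ℤ) := by exact_mod_cast hm
  have ht : ((m : ℤ)).toNat = m := Int.toNat_natCast m
  rw [htarget, if_neg h0, if_pos h1]
  rw [dif_pos (by rw [ht, h])]
  congr 1
  apply Subtype.ext
  show Function.update ε.1 _ _ = Function.update ε.1 m 1
  rw [ht, h]

lemma hAct_eq (m : ℕ) (hm : 0 < m) (u : HV) (h : ∀ ε ∈ u.support, ε.1 m = 2) :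
    hAct (m : ℤ) u = Finsupp.mapDomain (hg m) u := by
  rw [hAct, Finsupp.mapDomain, Finsupp.lsum_apply]
  refine Finsupp.sum_congr fun ε hε => ?_
  rw [LinearMap.toSpanSingleton_apply, htarget_pos_s16 m hm ε (h ε hε),
    Finsupp.smul_single, smul_eq_mul, mul_one]

lemma hg_injOn (m : ℕ) {s : Set HIdx} (hs : ∀ ε ∈ s, ε.1 m = 2) :
    Set.InjOn (hg m) s := by
  intro ε hε ε' hε' heq
  apply Subtype.ext
  funext n
  have := congrFun (congrArg Subtype.val heq) n
  rw [show (hg m ε).1 n = _ from hg_coe m ε n,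
    show (hg m ε').1 n = _ from hg_coe m ε' n] at this
  rcases eq_or_ne n m with rfl | hn
  · rw [hs ε hε, hs ε' hε']
  · simpa [hn] using this

/-- Iterated lowering of `u` at fresh positions `N+1, N+2, …`. -/
noncomputable def uSeq (u : HV) (N : ℕ) : ℕ → HV
  | 0 => u
  | k + 1 => hAct ((N + k + 1 : ℕ) : ℤ) (uSeq u N k)

/-- every nonzero `u ∈ V` generates an infinite-dimensional
`n₊`-submodule (any subspace containing `u` and stable under all `hAct i`, `i > 0`, is
infinite-dimensional); in particular no nonzero vector is annihilated by all of `n₊`. -/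
theorem stmt16 :
    (∀ u : HV, u ≠ 0 → ∀ W : Submodule ℂ HV, u ∈ W →
      (∀ i : ℤ, 0 < i → ∀ w ∈ W, hAct i w ∈ W) → ¬ Module.Finite ℂ W) ∧
    ¬ ∃ v : HV, v ≠ 0 ∧ ∀ i : ℤ, 0 < i → hAct i v = 0 := by
  have main : ∀ u : HV, u ≠ 0 → ∀ W : Submodule ℂ HV, u ∈ W →
      (∀ i : ℤ, 0 < i → ∀ w ∈ W, hAct i w ∈ W) → ¬ Module.Finite ℂ W := by
    intro u hu W huW hstab hfin
    classical
    -- a uniform stabilization bound for the support of `u`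
    obtain ⟨N, hNspec⟩ : ∃ N : ℕ, ∀ ε ∈ u.support, ∀ n, N < n → ε.1 n = 2 := by
      have hch : ∀ ε : HIdx, ∃ M, ∀ n, M < n → ε.1 n = 2 := by
        intro ε
        obtain ⟨M, hM⟩ := ε.2.2
        exact ⟨M, fun n hn => hM n hn.le⟩
      choose F hF using hch
      exact ⟨u.support.sup F, fun ε hε n hn =>
        hF ε n (lt_of_le_of_lt (Finset.le_sup hε) hn)⟩
    set uS : ℕ → HV := uSeq u N with huSdef
    have huSsucc : ∀ k, uS (k + 1) = hAct ((N + k + 1 : ℕ) : ℤ) (uS k) := fun k => rfl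
    -- the invariant
    have key : ∀ k, uS k ≠ 0 ∧ uS k ∈ W ∧
        ∀ ε ∈ (uS k).support,
          (∀ n, N < n → n ≤ N + k → ε.1 n = 1) ∧ (∀ n, N + k < n → ε.1 n = 2) := by
      intro k
      induction k with
      | zero =>
        refine ⟨hu, huW, fun ε hε => ⟨fun n h1 h2 => by omega, fun n hn => ?_⟩⟩
        exact hNspec ε hε n (by omega)
      | succ k ih =>
        obtain ⟨hne, hmem, hsupp⟩ := ih
        set m : ℕ := N + k + 1 with hm
        have hm0 : 0 < m := by omega
        have h2 : ∀ ε ∈ (uS k).support, ε.1 m = 2 := fun ε hε =>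
          (hsupp ε hε).2 m (by omega)
        have heq : uS (k + 1) = Finsupp.mapDomain (hg m) (uS k) := by
          rw [huSsucc k, hAct_eq m hm0 _ h2]
        have hsuppeq : (uS (k + 1)).support = ((uS k).support).image (hg m) := by
          rw [heq]
          exact Finsupp.mapDomain_support_of_injOn (uS k)
            (hg_injOn m (fun ε hε => h2 ε hε))
        refine ⟨?_, ?_, ?_⟩
        · intro h0
          obtain ⟨ε, hε⟩ := Finsupp.support_nonempty_iff.2 hne
          have : (uS (k+1)).support.Nonempty := by
            rw [hsuppeq]; exact ⟨hg m ε, Finset.mem_image_of_mem _ hε⟩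
          rw [h0] at this; simp at this
        · rw [huSsucc k]
          exact hstab _ (by exact_mod_cast hm0) _ hmem
        · intro ε' hε'
          rw [hsuppeq] at hε'
          obtain ⟨ε, hε, rfl⟩ := Finset.mem_image.1 hε'
          constructor
          · intro n h1n h2n
            rw [hg_coe]
            rcases eq_or_ne n m with rfl | hn
            · simp
            · rw [if_neg hn]
              exact (hsupp ε hε).1 n h1n (by omega)
          · intro n hn
            rw [hg_coe, if_neg (by omega)]
            exact (hsupp ε hε).2 n (by omega)
    -- pairwise disjoint supports
    have hdisj : ∀ k l, k < l → ∀ ε ∈ (uS k).support, ∀ ε' ∈ (uS l).support, ε ≠ ε' := by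
      intro k l hkl ε hε ε' hε' heq
      have h1 : ε.1 (N + k + 1) = 2 := ((key k).2.2 ε hε).2 _ (by omega)
      have h2 : ε'.1 (N + k + 1) = 1 := ((key l).2.2 ε' hε').1 _ (by omega) (by omega)
      rw [heq, h2] at h1
      exact absurd h1 (by omega)
    -- the family in W
    have hmemW : ∀ k, uS k ∈ W := fun k => (key k).2.1
    have hliHV : LinearIndependent ℂ uS := by
      rw [linearIndependent_iff']
      intro s g hsum i hi
      obtain ⟨ε, hε⟩ := Finsupp.support_nonempty_iff.2 (key i).1
      have hval := congrFun (congrArg (DFunLike.coe) hsum) ε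
      rw [Finsupp.finset_sum_apply] at hval
      have hzero : ∀ j ∈ s, j ≠ i → (g j • uS j) ε = 0 := by
        intro j _ hji
        have : ε ∉ (uS j).support := by
          intro hj
          rcases lt_or_gt_of_ne hji with h | h
          · exact hdisj j i h ε hj ε hε rfl
          · exact hdisj i j h ε hε ε hj rfl
        rw [Finsupp.smul_apply, Finsupp.notMem_support_iff.1 this, smul_zero]
      rw [Finset.sum_eq_single i hzero (fun h => absurd hi h)] at hval
      have hεne : uS i ε ≠ 0 := Finsupp.mem_support_iff.1 hε
      rw [Finsupp.smul_apply, Finsupp.coe_zero, Pi.zero_apply, smul_eq_mul] at hval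
      exact (mul_eq_zero.1 hval).resolve_right hεne
    have hspan : Submodule.span ℂ (Set.range uS) ≤ W := by
      rw [Submodule.span_le]; rintro _ ⟨k, rfl⟩; exact hmemW k
    have h1 : Module.rank ℂ (Submodule.span ℂ (Set.range uS)) = Cardinal.mk (Set.range uS) :=
      rank_span hliHV
    have h2 : Cardinal.mk (Set.range uS) = Cardinal.aleph0 := by
      rw [Cardinal.mk_range_eq _ hliHV.injective, Cardinal.mk_nat]
    have h3 := Submodule.rank_mono hspan
    have h4 : Module.rank ℂ W < Cardinal.aleph0 := Module.rank_lt_aleph0 ℂ W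
    rw [h1, h2] at h3
    exact absurd (lt_of_le_of_lt h3 h4) (lt_irrefl _)
  refine ⟨main, ?_⟩
  rintro ⟨v, hv, hann⟩
  refine main v hv (Submodule.span ℂ {v}) (Submodule.mem_span_singleton_self v) ?_ ?_
  · intro i hi w hw
    obtain ⟨c, rfl⟩ := Submodule.mem_span_singleton.1 hw
    rw [map_smul, hann i hi, smul_zero]
    exact (Submodule.span ℂ {v}).zero_mem
  · infer_instance
end
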